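/- L₊(x·∇Q∞ + 2Q∞) = −2λ Q∞ pointwise on ℝ³, where (x·∇Q∞)(x) := x·∇Q∞(x). -/

import Mathlib

open MeasureTheory
open scoped SchwartzMap

noncomputable section

abbrev R3 := EuclideanSpace ℝ (Fin 3)

/-- Newtonian potential convolution `(|x|⁻¹ ∗ f)(x) = ∫ f(y)/|x-y| dy`. -/
def conv (f : R3 → ℝ) (x : R3) : ℝ := ∫ y : R3, f y / ‖x - y‖

/-- Radial symmetry. -/
def Radial (f : R3 → ℝ) : Prop := ∀ x y : R3, ‖x‖ = ‖y‖ → f x = f y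

/-- The Laplacian on `ℝ³`, as a sum of second directional derivatives along the
standard basis. -/
def lap (f : R3 → ℝ) (x : R3) : ℝ :=
  ∑ i : Fin 3,
    fderiv ℝ (fun y => fderiv ℝ f y (EuclideanSpace.single i (1 : ℝ))) x
      (EuclideanSpace.single i (1 : ℝ))

/-- The linearized operator
`L₊ξ = −(1/(2m))Δξ + λξ − (|x|⁻¹ ∗ Q²) ξ − 2(|x|⁻¹ ∗ (Qξ)) Q`. -/
def Lplus (m lam : ℝ) (Q : R3 → ℝ) (f : R3 → ℝ) (x : R3) : ℝ :=
  -(1 / (2 * m)) * lap f x + lam * f x - conv (fun y => (Q y) ^ 2) x * f x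
    - 2 * conv (fun y => Q y * f y) x * Q x

namespace Stmt7Aux
open Metric Set
lemma integrableOn_inv_norm_ball (x : R3) :
    IntegrableOn (fun y : R3 => ‖x - y‖⁻¹) (ball x 1) volume := by
  have hmeas : Measurable fun y : R3 => ‖x - y‖⁻¹ :=
    ((measurable_const.sub measurable_id).norm).inv
  have hB : volume (ball x 1) < ⊤ := measure_ball_lt_top
  constructor
  · exact hmeas.aestronglyMeasurable
  · rw [hasFiniteIntegral_iff_norm]
    have key := lintegral_eq_lintegral_meas_le (volume.restrict (ball x 1))
      (f := fun y : R3 => ‖x - y‖⁻¹) (Filter.Eventually.of_forall (fun y => by positivity))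
      hmeas.aemeasurable
    have hfn : ∀ y : R3, ‖(‖x - y‖⁻¹)‖ = ‖x - y‖⁻¹ := fun y => by
      rw [Real.norm_eq_abs, abs_of_nonneg (by positivity)]
    simp only [hfn]
    rw [key]
    have hsplit : (∫⁻ t in Ioi (0:ℝ), (volume.restrict (ball x 1)) {a | t ≤ ‖x - a‖⁻¹})
        ≤ (∫⁻ t in Ioc (0:ℝ) 1, (volume.restrict (ball x 1)) {a | t ≤ ‖x - a‖⁻¹})
          + ∫⁻ t in Ioi (1:ℝ), (volume.restrict (ball x 1)) {a | t ≤ ‖x - a‖⁻¹} :=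
      le_trans (lintegral_mono_set Ioi_subset_Ioc_union_Ioi) (lintegral_union_le _ _ _)
    refine lt_of_le_of_lt hsplit (ENNReal.add_lt_top.2 ⟨?_, ?_⟩)
    · calc (∫⁻ t in Ioc (0:ℝ) 1, (volume.restrict (ball x 1)) {a | t ≤ ‖x - a‖⁻¹})
          ≤ ∫⁻ _t in Ioc (0:ℝ) 1, volume (ball x 1) := by
            refine lintegral_mono (fun t => ?_)
            refine le_trans (measure_mono (subset_univ _)) ?_
            rw [Measure.restrict_apply_univ]
        _ < ⊤ := by
            rw [setLIntegral_const]
            exact ENNReal.mul_lt_top hB (by simp [Real.volume_Ioc])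
    · have hb : ∀ t ∈ Ioi (1:ℝ), (volume.restrict (ball x 1)) {a | t ≤ ‖x - a‖⁻¹}
          ≤ ENNReal.ofReal (t ^ (-3:ℝ)) * volume (ball (0:R3) 1) := by
        intro t ht
        have ht1 : (1:ℝ) < t := ht
        have ht0 : (0:ℝ) < t := lt_trans one_pos ht1
        have hsub : {a : R3 | t ≤ ‖x - a‖⁻¹} ⊆ closedBall x t⁻¹ := by
          intro a ha
          simp only [mem_setOf_eq] at ha
          have hna : 0 < ‖x - a‖⁻¹ := lt_of_lt_of_le ht0 ha
          have hna' : 0 < ‖x - a‖ := by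
            rcases (norm_nonneg (x - a)).lt_or_eq with h | h
            · exact h
            · rw [← h] at hna; simp at hna
          rw [mem_closedBall, dist_eq_norm, ← norm_sub_rev, le_inv_comm₀ hna' ht0]
          exact ha
        calc (volume.restrict (ball x 1)) {a | t ≤ ‖x - a‖⁻¹}
            ≤ volume (closedBall x t⁻¹) :=
              le_trans (Measure.restrict_le_self _) (measure_mono hsub)
          _ = ENNReal.ofReal (t⁻¹ ^ Module.finrank ℝ R3) * volume (ball (0:R3) 1) :=
              Measure.addHaar_closedBall _ _ (by positivity)
          _ = ENNReal.ofReal (t ^ (-3:ℝ)) * volume (ball (0:R3) 1) := by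
              congr 1
              rw [finrank_euclideanSpace_fin,
                show (t:ℝ) ^ (-3:ℝ) = (t ^ (3:ℕ))⁻¹ by
                  rw [← Real.rpow_natCast t 3, ← Real.rpow_neg ht0.le]; norm_num,
                inv_pow]
      calc (∫⁻ t in Ioi (1:ℝ), (volume.restrict (ball x 1)) {a | t ≤ ‖x - a‖⁻¹})
          ≤ ∫⁻ t in Ioi (1:ℝ), ENNReal.ofReal (t ^ (-3:ℝ)) * volume (ball (0:R3) 1) :=
            setLIntegral_mono' measurableSet_Ioi hb
        _ = (∫⁻ t in Ioi (1:ℝ), ENNReal.ofReal (t ^ (-3:ℝ))) * volume (ball (0:R3) 1) := by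
            rw [lintegral_mul_const' _ _ measure_ball_lt_top.ne]
        _ < ⊤ := by
            refine ENNReal.mul_lt_top ?_ measure_ball_lt_top
            exact IntegrableOn.setLIntegral_lt_top
              (integrableOn_Ioi_rpow_of_lt (by norm_num) one_pos)

lemma integrable_decay_div (x : R3) {f : R3 → ℝ} (hfm : AEStronglyMeasurable f volume)
    {C : ℝ} (hf : ∀ y, |f y| ≤ C / (1 + ‖y‖) ^ 4) :
    Integrable (fun y => f y / ‖x - y‖) volume := by
  have hC : 0 ≤ C := by
    have h2 := le_trans (abs_nonneg (f 0)) (hf 0)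
    have h1 : (0:ℝ) < (1 + ‖(0:R3)‖) ^ 4 := by positivity
    have := (div_nonneg_iff.mp h2)
    rcases this with h | h
    · exact h.1
    · nlinarith [h.2, h1]
  have hgm : Measurable fun y : R3 => C / (1 + ‖y‖) ^ 4 * ‖x - y‖⁻¹ := by
    exact (measurable_const.div ((measurable_const.add measurable_norm).pow_const 4)).mul
      ((measurable_const.sub measurable_id).norm).inv
  have hbound : ∀ y : R3, ‖f y / ‖x - y‖‖ ≤ C / (1 + ‖y‖) ^ 4 * ‖x - y‖⁻¹ := by
    intro y
    rw [Real.norm_eq_abs, div_eq_mul_inv, abs_mul, abs_inv, abs_norm]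
    exact mul_le_mul_of_nonneg_right (hf y) (by positivity)
  have hgint : Integrable (fun y : R3 => C / (1 + ‖y‖) ^ 4 * ‖x - y‖⁻¹) volume := by
    rw [← integrableOn_univ, ← Set.union_compl_self (ball x 1)]
    refine IntegrableOn.union ?_ ?_
    · -- on ball x 1
      refine Integrable.mono' ((integrableOn_inv_norm_ball x).const_mul C)
        hgm.aestronglyMeasurable ?_
      refine Filter.Eventually.of_forall (fun y => ?_)
      rw [Real.norm_eq_abs, abs_of_nonneg (by positivity)]
      refine mul_le_mul_of_nonneg_right ?_ (by positivity)
      refine div_le_self hC ?_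
      calc (1:ℝ) = 1 ^ 4 := by norm_num
        _ ≤ (1 + ‖y‖) ^ 4 := by gcongr <;> linarith [norm_nonneg y]
    · -- off the ball
      refine Integrable.mono' (g := fun y : R3 => C * (1 + ‖y‖) ^ (-(4:ℝ)))
        (Integrable.integrableOn ((integrable_one_add_norm (by
          rw [finrank_euclideanSpace_fin]; norm_num)).const_mul C)) hgm.aestronglyMeasurable ?_
      rw [ae_restrict_iff' measurableSet_ball.compl]
      refine Filter.Eventually.of_forall (fun y hy => ?_)
      have h1y : (1:ℝ) ≤ ‖x - y‖ := by
        simp only [Set.mem_compl_iff, mem_ball, not_lt] at hy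
        calc (1:ℝ) ≤ dist y x := hy
          _ = ‖x - y‖ := by rw [dist_eq_norm, norm_sub_rev]
      rw [Real.norm_eq_abs, abs_of_nonneg (by positivity)]
      have h2 : ‖x - y‖⁻¹ ≤ 1 := inv_le_one_of_one_le₀ h1y
      have h3 : (1 + ‖y‖) ^ (-(4:ℝ)) = ((1 + ‖y‖) ^ (4:ℕ))⁻¹ := by
        rw [← Real.rpow_natCast (1 + ‖y‖) 4, ← Real.rpow_neg (by positivity)]
        norm_num
      refine le_trans (mul_le_mul_of_nonneg_left h2 (by positivity)) ?_
      show C / (1 + ‖y‖) ^ 4 * 1 ≤ C * (1 + ‖y‖) ^ (-(4:ℝ))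
      rw [h3, mul_one]
      exact le_of_eq (by ring)
  have hms : AEStronglyMeasurable (fun y => f y / ‖x - y‖) volume := by
    have h := hfm.mul ((((measurable_const.sub measurable_id).norm).inv).aestronglyMeasurable :
      AEStronglyMeasurable (fun y : R3 => ‖x - y‖⁻¹) volume)
    rw [show (fun y => f y / ‖x - y‖) = f * (fun y : R3 => ‖x - y‖⁻¹) from funext fun y => div_eq_mul_inv _ _]
    exact h
  exact hgint.mono' hms (Filter.Eventually.of_forall hbound)

lemma schwartz_decay (f : 𝓢(R3, ℝ)) (k n : ℕ) :
    ∃ C : ℝ, 0 ≤ C ∧ ∀ y : R3, ‖iteratedFDeriv ℝ n (⇑f) y‖ ≤ C / (1 + ‖y‖) ^ k := by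
  refine ⟨2 ^ k * (Finset.Iic (k, n)).sup (fun mm => SchwartzMap.seminorm ℝ mm.1 mm.2) f,
    mul_nonneg (by positivity) (apply_nonneg _ _), fun y => ?_⟩
  rw [le_div_iff₀ (by positivity), mul_comm]
  exact SchwartzMap.one_add_le_sup_seminorm_apply (m := (k, n)) le_rfl le_rfl f y
variable {F : Type*} [NormedAddCommGroup F] [NormedSpace ℝ F]
lemma fderiv_clm_const {c : R3 → (R3 →L[ℝ] F)} {x : R3} (hc : DifferentiableAt ℝ c x)
    (v a : R3) : fderiv ℝ (fun y => c y v) x a = fderiv ℝ c x a v := by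
  rw [fderiv_clm_apply hc (differentiableAt_const v)]; simp
lemma fderiv_clm_id {c : R3 → (R3 →L[ℝ] F)} {x : R3} (hc : DifferentiableAt ℝ c x)
    (a : R3) : fderiv ℝ (fun y => c y y) x a = c x a + fderiv ℝ c x a x := by
  rw [fderiv_clm_apply hc differentiableAt_fun_id]; simp
end Stmt7Aux

set_option maxHeartbeats 2000000 in
open Stmt7Aux Metric Set in
/-- `L₊(x·∇Q∞ + 2Q∞) = −2λQ∞`. -/
theorem stmt_7 (m lam : ℝ) (hm : 0 < m) (hlam : 0 < lam)
    (Q : 𝓢(R3, ℝ)) (hpos : ∀ x, 0 < Q x) (hrad : Radial Q)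
    (heq : ∀ x : R3,
      -(1 / (2 * m)) * lap (⇑Q) x + lam * Q x = conv (fun y => (Q y) ^ 2) x * Q x) :
    ∀ x : R3,
      Lplus m lam (⇑Q) (fun y => fderiv ℝ (⇑Q) y y + 2 * Q y) x = -2 * lam * Q x := by
  intro x
  have hQs : ContDiff ℝ ((⊤:ℕ∞) : WithTop ℕ∞) (⇑Q) := Q.smooth ⊤
  have htop1 : ((⊤:ℕ∞) : WithTop ℕ∞) + 1 ≤ ((⊤:ℕ∞) : WithTop ℕ∞) := le_of_eq ENat.coe_top_add_one
  have hone : (1 : WithTop ℕ∞) ≤ ((⊤:ℕ∞) : WithTop ℕ∞) := by exact_mod_cast le_top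
  set f₁ : R3 → R3 →L[ℝ] ℝ := fderiv ℝ (⇑Q) with hf₁def
  set f₂ := fderiv ℝ f₁ with hf₂def
  set f₃ := fderiv ℝ f₂ with hf₃def
  have hf₁s : ContDiff ℝ ((⊤:ℕ∞) : WithTop ℕ∞) f₁ := hQs.fderiv_right htop1
  have hf₂s : ContDiff ℝ ((⊤:ℕ∞) : WithTop ℕ∞) f₂ := hf₁s.fderiv_right htop1
  have hdQ : ∀ y, DifferentiableAt ℝ (⇑Q) y := fun y => hQs.differentiable (by simp) y
  have hdf₁ : ∀ y, DifferentiableAt ℝ f₁ y := fun y => hf₁s.differentiable (by simp) y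
  have hdf₂ : ∀ y, DifferentiableAt ℝ f₂ y := fun y => hf₂s.differentiable (by simp) y
  set e : Fin 3 → R3 := fun i => EuclideanSpace.single i (1 : ℝ) with hedef
  have he : ∀ i, EuclideanSpace.single i (1 : ℝ) = e i := fun i => rfl
  have hlapf : ∀ (f : R3 → ℝ) (y : R3),
      lap f y = ∑ i, fderiv ℝ (fun z => fderiv ℝ f z (e i)) y (e i) := by
    intro f y; simp only [lap, he]
  -- pointwise formula for lap Q
  have hlapQpt : ∀ y, lap (⇑Q) y = ∑ i, f₂ y (e i) (e i) := by
    intro y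
    rw [hlapf]
    exact Finset.sum_congr rfl fun i _ => fderiv_clm_const (hdf₁ y) (e i) (e i)
  -- differentiability of summands
  have hdlapS : ∀ i : Fin 3, DifferentiableAt ℝ (fun y => f₂ y (e i) (e i)) x :=
    fun i => ((hdf₂ x).clm_apply (differentiableAt_const _)).clm_apply (differentiableAt_const _)
  have hdSum : DifferentiableAt ℝ (fun y => ∑ i, f₂ y (e i) (e i)) x := by
    apply DifferentiableAt.fun_sum (fun i _ => hdlapS i)
  have hTT : ∀ a b c' : R3, fderiv ℝ (fun y => f₂ y b c') x a = f₃ x a b c' := by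
    intro a b c'
    have h1 : DifferentiableAt ℝ (fun y => f₂ y b) x :=
      (hdf₂ x).clm_apply (differentiableAt_const _)
    rw [fderiv_clm_const (c := fun y => f₂ y b) h1 c' a, fderiv_clm_const (hdf₂ x) b a]
  -- symmetry
  have hsym2 : ∀ (y a b : R3), f₂ y a b = f₂ y b a := fun y a b =>
    second_derivative_symmetric (fun z => (hdQ z).hasFDerivAt) (hdf₁ y).hasFDerivAt a b
  have hsym12 : ∀ a b : R3, f₃ x a b = f₃ x b a := fun a b =>
    second_derivative_symmetric (fun z => (hdf₁ z).hasFDerivAt) (hdf₂ x).hasFDerivAt a b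
  have hsym23 : ∀ a b c' : R3, f₃ x a b c' = f₃ x a c' b := by
    intro a b c'
    have hfun : (fun y => f₂ y b c') = (fun y => f₂ y c' b) := funext fun y => hsym2 y b c'
    rw [← hTT a b c', ← hTT a c' b, hfun]
  -- Laplacian of ξ
  have hdxi1 : ∀ y, DifferentiableAt ℝ (fun z => f₁ z z) y :=
    fun y => (hdf₁ y).clm_apply differentiableAt_fun_id
  have hxid : ∀ (y v : R3), fderiv ℝ (fun z => f₁ z z + 2 * Q z) y v
      = f₁ y v + f₂ y v y + 2 * f₁ y v := by
    intro y v
    rw [fderiv_fun_add (hdxi1 y) ((hdQ y).const_mul 2), ContinuousLinearMap.add_apply,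
      fderiv_clm_id (hdf₁ y) v, fderiv_const_mul (hdQ y) 2]
    simp only [ContinuousLinearMap.smul_apply, smul_eq_mul]
    rfl
  have hlapxi : lap (fun y => f₁ y y + 2 * Q y) x
      = 4 * lap (⇑Q) x + ∑ i, f₃ x x (e i) (e i) := by
    rw [hlapf]
    have hfun : ∀ i : Fin 3, (fun y => fderiv ℝ (fun z => f₁ z z + 2 * Q z) y (e i))
        = (fun y => f₁ y (e i) + f₂ y (e i) y + 2 * f₁ y (e i)) :=
      fun i => funext fun y => hxid y (e i)
    calc (∑ i, fderiv ℝ (fun y => fderiv ℝ (fun z => f₁ z z + 2 * Q z) y (e i)) x (e i))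
        = ∑ i, (4 * f₂ x (e i) (e i) + f₃ x x (e i) (e i)) := by
          refine Finset.sum_congr rfl fun i _ => ?_
          rw [hfun i]
          have d1 : DifferentiableAt ℝ (fun y => f₁ y (e i)) x :=
            (hdf₁ x).clm_apply (differentiableAt_const _)
          have d2 : DifferentiableAt ℝ (fun y => f₂ y (e i) y) x :=
            ((hdf₂ x).clm_apply (differentiableAt_const _)).clm_apply differentiableAt_fun_id
          have d3 : DifferentiableAt ℝ (fun y => 2 * f₁ y (e i)) x := d1.const_mul 2
          have h2 : fderiv ℝ (fun y => f₂ y (e i) y) x (e i)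
              = f₂ x (e i) (e i) + f₃ x (e i) (e i) x := by
            rw [fderiv_clm_id ((hdf₂ x).clm_apply (differentiableAt_const _)) (e i),
              fderiv_clm_const (hdf₂ x) (e i) (e i)]
          have hs : f₃ x (e i) (e i) x = f₃ x x (e i) (e i) := by
            rw [hsym23 (e i) (e i) x, hsym12 (e i) x]
          rw [fderiv_fun_add (d1.fun_add d2) d3, ContinuousLinearMap.add_apply,
            fderiv_fun_add d1 d2, ContinuousLinearMap.add_apply,
            fderiv_clm_const (hdf₁ x) (e i) (e i), h2, fderiv_const_mul d1 2,
            ContinuousLinearMap.smul_apply, fderiv_clm_const (hdf₁ x) (e i) (e i), hs]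
          simp only [smul_eq_mul]
          ring
      _ = 4 * lap (⇑Q) x + ∑ i, f₃ x x (e i) (e i) := by
          rw [Finset.sum_add_distrib, ← Finset.mul_sum, hlapQpt x]
  -- derivative of the Σ form of lap Q
  have hfderivS : fderiv ℝ (fun y => ∑ i, f₂ y (e i) (e i)) x x
      = ∑ i, f₃ x x (e i) (e i) := by
    rw [fderiv_fun_sum (fun i _ => hdlapS i), ContinuousLinearMap.sum_apply]
    exact Finset.sum_congr rfl fun i _ => hTT x (e i) (e i)
  -- decay constants
  obtain ⟨C0, hC0n, hC0⟩ := schwartz_decay Q 0 0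
  obtain ⟨C4, hC4n, hC4⟩ := schwartz_decay Q 4 0
  obtain ⟨C5, hC5n, hC5⟩ := schwartz_decay Q 5 1
  have hQabs : ∀ y : R3, |Q y| ≤ C0 := by
    intro y
    have h := hC0 y
    rwa [norm_iteratedFDeriv_zero, pow_zero, div_one, Real.norm_eq_abs] at h
  have hQ4 : ∀ y : R3, |Q y| ≤ C4 / (1 + ‖y‖) ^ 4 := by
    intro y
    have h := hC4 y
    rwa [norm_iteratedFDeriv_zero, Real.norm_eq_abs] at h
  have hf₁5 : ∀ y : R3, ‖f₁ y‖ ≤ C5 / (1 + ‖y‖) ^ 5 := by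
    intro y
    have h := hC5 y
    rwa [← norm_iteratedFDeriv_fderiv, norm_iteratedFDeriv_zero] at h
  have hcontf1app : Continuous fun z : R3 => f₁ z z :=
    hf₁s.continuous.clm_apply continuous_id
  have hmQ2 : AEStronglyMeasurable (fun y : R3 => Q y ^ 2) volume :=
    (Q.continuous.pow 2).aestronglyMeasurable
  have hQ2bound : ∀ y : R3, |Q y ^ 2| ≤ C0 * C4 / (1 + ‖y‖) ^ 4 := by
    intro y
    have h : |Q y ^ 2| = |Q y| * |Q y| := by rw [pow_two, abs_mul]
    rw [h, mul_div_assoc]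
    exact mul_le_mul (hQabs y) (hQ4 y) (abs_nonneg _) hC0n
  have hintQ2 : Integrable (fun y : R3 => Q y ^ 2 / ‖x - y‖) volume :=
    integrable_decay_div x hmQ2 hQ2bound
  have hgmeas : AEStronglyMeasurable (fun z : R3 => 2 * Q z * f₁ z z) volume :=
    ((continuous_const.mul Q.continuous).mul hcontf1app).aestronglyMeasurable
  have hf₁app_bound : ∀ w z : R3, |f₁ w z| ≤ C5 / (1 + ‖w‖) ^ 5 * ‖z‖ := by
    intro w z
    calc |f₁ w z| ≤ ‖f₁ w‖ * ‖z‖ := (f₁ w).le_opNorm z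
      _ ≤ C5 / (1 + ‖w‖) ^ 5 * ‖z‖ := mul_le_mul_of_nonneg_right (hf₁5 w) (norm_nonneg z)
  have hzbound : ∀ z : R3, ‖z‖ * (1 + ‖z‖) ^ 4 ≤ (1 + ‖z‖) ^ 5 := by
    intro z
    calc ‖z‖ * (1 + ‖z‖) ^ 4 ≤ (1 + ‖z‖) * (1 + ‖z‖) ^ 4 :=
          mul_le_mul_of_nonneg_right (by linarith [norm_nonneg z]) (by positivity)
      _ = (1 + ‖z‖) ^ 5 := by ring
  have hgbound : ∀ z : R3, |2 * Q z * f₁ z z| ≤ 2 * C0 * C5 / (1 + ‖z‖) ^ 4 := by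
    intro z
    have h1 : |f₁ z z| ≤ C5 / (1 + ‖z‖) ^ 4 := by
      refine le_trans (hf₁app_bound z z) ?_
      rw [div_mul_eq_mul_div, div_le_div_iff₀ (by positivity) (by positivity)]
      calc C5 * ‖z‖ * (1 + ‖z‖) ^ 4 = C5 * (‖z‖ * (1 + ‖z‖) ^ 4) := by ring
        _ ≤ C5 * (1 + ‖z‖) ^ 5 := mul_le_mul_of_nonneg_left (hzbound z) hC5n
    calc |2 * Q z * f₁ z z| = 2 * |Q z| * |f₁ z z| := by rw [abs_mul, abs_mul, abs_two]
      _ ≤ 2 * C0 * (C5 / (1 + ‖z‖) ^ 4) := by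
          refine mul_le_mul ?_ h1 (abs_nonneg _) (by positivity)
          exact mul_le_mul_of_nonneg_left (hQabs z) (by norm_num)
      _ = 2 * C0 * C5 / (1 + ‖z‖) ^ 4 := by ring
  have hintg : Integrable (fun z : R3 => 2 * Q z * f₁ z z / ‖x - z‖) volume :=
    integrable_decay_div x hgmeas hgbound
  set J : ℝ := ∫ z : R3, 2 * Q z * f₁ z z / ‖x - z‖ with hJdef
  have hG : HasDerivAt (fun t : ℝ => ∫ z : R3, Q (t • z) ^ 2 / ‖x - z‖) J 1 := by
    have hFmeas : ∀ᶠ t in nhds (1:ℝ), AEStronglyMeasurable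
        (fun z : R3 => Q (t • z) ^ 2 / ‖x - z‖) volume := by
      refine Filter.Eventually.of_forall (fun t => ?_)
      have h1 : Measurable fun z : R3 => Q (t • z) ^ 2 :=
        ((Q.continuous.comp (continuous_const_smul t)).pow 2).measurable
      have h2 : Measurable fun z : R3 => ‖x - z‖⁻¹ :=
        ((measurable_const.sub measurable_id).norm).inv
      have h3 : AEStronglyMeasurable (fun z : R3 => Q (t • z) ^ 2 * ‖x - z‖⁻¹) volume :=
        (h1.mul h2).aestronglyMeasurable
      simpa [div_eq_mul_inv] using h3
    have hFint : Integrable (fun z : R3 => Q ((1:ℝ) • z) ^ 2 / ‖x - z‖) volume := by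
      simpa [one_smul] using hintQ2
    have hF'meas : AEStronglyMeasurable
        (fun z : R3 => 2 * Q ((1:ℝ) • z) * f₁ ((1:ℝ) • z) z / ‖x - z‖) volume := by
      have h2 : Measurable fun z : R3 => ‖x - z‖⁻¹ :=
        ((measurable_const.sub measurable_id).norm).inv
      have h1 : Continuous fun z : R3 => 2 * Q ((1:ℝ) • z) * f₁ ((1:ℝ) • z) z :=
        (continuous_const.mul (Q.continuous.comp (continuous_const_smul (1:ℝ)))).mul
          ((hf₁s.continuous.comp (continuous_const_smul (1:ℝ))).clm_apply continuous_id)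
      have h3 : AEStronglyMeasurable
          (fun z : R3 => 2 * Q ((1:ℝ) • z) * f₁ ((1:ℝ) • z) z * ‖x - z‖⁻¹) volume :=
        (h1.measurable.mul h2).aestronglyMeasurable
      simpa [div_eq_mul_inv] using h3
    have hbound : ∀ᵐ z : R3 ∂volume, ∀ t ∈ ball (1:ℝ) (1/2),
        ‖2 * Q (t • z) * f₁ (t • z) z / ‖x - z‖‖
          ≤ 64 * C0 * C5 / (1 + ‖z‖) ^ 4 / ‖x - z‖ := by
      refine Filter.Eventually.of_forall (fun z t ht => ?_)
      have ht2 : (1:ℝ)/2 ≤ |t| := by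
        rw [mem_ball, Real.dist_eq] at ht
        rcases abs_sub_lt_iff.mp ht with ⟨h1, h2⟩
        rw [le_abs]; left; linarith
      have hsm : (1 + ‖z‖) / 2 ≤ 1 + ‖t • z‖ := by
        rw [norm_smul, Real.norm_eq_abs]
        have h4 : (1:ℝ)/2 * ‖z‖ ≤ |t| * ‖z‖ := mul_le_mul_of_nonneg_right ht2 (norm_nonneg z)
        linarith
      have hpow32 : (1 + ‖z‖) ^ 5 / 32 ≤ (1 + ‖t • z‖) ^ 5 := by
        have h32 : ((1 + ‖z‖) / 2) ^ 5 ≤ (1 + ‖t • z‖) ^ 5 := by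
          gcongr
        calc (1 + ‖z‖) ^ 5 / 32 = ((1 + ‖z‖) / 2) ^ 5 := by ring
          _ ≤ _ := h32
      have h2b : C5 / (1 + ‖t • z‖) ^ 5 * ‖z‖ ≤ 32 * C5 / (1 + ‖z‖) ^ 4 := by
        rw [div_mul_eq_mul_div, div_le_div_iff₀ (by positivity) (by positivity)]
        have hz1 : C5 * ‖z‖ * (1 + ‖z‖) ^ 4 ≤ C5 * (1 + ‖z‖) ^ 5 := by
          have h5 := hzbound z
          nlinarith [hC5n]
        have hz2 : C5 * (1 + ‖z‖) ^ 5 ≤ 32 * C5 * (1 + ‖t • z‖) ^ 5 := by nlinarith [hC5n, hpow32]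
        linarith
      have hnum : |2 * Q (t • z) * f₁ (t • z) z| ≤ 64 * C0 * C5 / (1 + ‖z‖) ^ 4 := by
        calc |2 * Q (t • z) * f₁ (t • z) z| = 2 * |Q (t • z)| * |f₁ (t • z) z| := by
              rw [abs_mul, abs_mul, abs_two]
          _ ≤ 2 * C0 * (32 * C5 / (1 + ‖z‖) ^ 4) := by
              refine mul_le_mul ?_ (le_trans (hf₁app_bound (t • z) z) h2b) (abs_nonneg _)
                (by positivity)
              exact mul_le_mul_of_nonneg_left (hQabs (t • z)) (by norm_num)
          _ = 64 * C0 * C5 / (1 + ‖z‖) ^ 4 := by ring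
      rw [Real.norm_eq_abs, abs_div, abs_norm]
      rcases (norm_nonneg (x - z)).eq_or_lt with h0 | h0
      · rw [← h0]; simp
      · exact (div_le_div_iff_of_pos_right h0).mpr hnum
    have hboundint : Integrable (fun z : R3 => 64 * C0 * C5 / (1 + ‖z‖) ^ 4 / ‖x - z‖) volume := by
      refine integrable_decay_div x (C := 64 * C0 * C5) ?_ (fun y => ?_)
      · exact (continuous_const.div ((continuous_const.add continuous_norm).pow 4)
          (fun z => (by positivity : (1 + ‖z‖) ^ 4 ≠ 0))).aestronglyMeasurable
      · rw [abs_of_nonneg (by positivity)]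
    have hdiff : ∀ᵐ z : R3 ∂volume, ∀ t ∈ ball (1:ℝ) (1/2),
        HasDerivAt (fun s : ℝ => Q (s • z) ^ 2 / ‖x - z‖)
          (2 * Q (t • z) * f₁ (t • z) z / ‖x - z‖) t := by
      refine Filter.Eventually.of_forall (fun z t _ => ?_)
      have h1 : HasDerivAt (fun s : ℝ => s • z) z t := by
        simpa using (hasDerivAt_id t).smul_const z
      have h2 : HasDerivAt (fun s : ℝ => Q (s • z)) (f₁ (t • z) z) t :=
        (hdQ (t • z)).hasFDerivAt.comp_hasDerivAt t h1
      have h3 : HasDerivAt (fun s : ℝ => Q (s • z) ^ 2 / ‖x - z‖)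
          (((2:ℕ):ℝ) * Q (t • z) ^ (2 - 1) * f₁ (t • z) z / ‖x - z‖) t :=
        (h2.pow 2).div_const ‖x - z‖
      convert h3 using 1
      push_cast
      rw [pow_one]
    have main := hasDerivAt_integral_of_dominated_loc_of_deriv_le (μ := volume)
      (F := fun (t:ℝ) (z:R3) => Q (t • z) ^ 2 / ‖x - z‖)
      (F' := fun (t:ℝ) (z:R3) => 2 * Q (t • z) * f₁ (t • z) z / ‖x - z‖)
      (x₀ := (1:ℝ)) (s := ball (1:ℝ) (1/2)) (ball_mem_nhds _ (by norm_num)) hFmeas hFint hF'meas hbound hboundint hdiff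
    have h4 := main.2
    simp only [one_smul] at h4
    exact h4
  set V : R3 → ℝ := conv (fun y => Q y ^ 2) with hVdef
  have hG1 : (∫ z : R3, Q ((1:ℝ) • z) ^ 2 / ‖x - z‖) = V x := by
    simp only [one_smul]; rfl
  have hdil : ∀ t : ℝ, 0 < t → V (t • x) = t ^ 2 * ∫ z : R3, Q (t • z) ^ 2 / ‖x - z‖ := by
    intro t ht
    have hcv := MeasureTheory.Measure.integral_comp_smul (volume : Measure R3)
      (fun y : R3 => Q y ^ 2 / ‖t • x - y‖) t
    simp only [finrank_euclideanSpace_fin, smul_eq_mul] at hcv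
    have habs : |((t:ℝ) ^ 3)⁻¹| = (t ^ 3)⁻¹ := abs_of_pos (by positivity)
    rw [habs] at hcv
    have hptw : ∀ z : R3, Q (t • z) ^ 2 / ‖t • x - t • z‖ = Q (t • z) ^ 2 / ‖x - z‖ / t := by
      intro z
      rw [← smul_sub, norm_smul, Real.norm_eq_abs, abs_of_pos ht, div_div, mul_comm]
    simp only [hptw] at hcv
    rw [integral_div] at hcv
    have hVtx : V (t • x) = ∫ y : R3, Q y ^ 2 / ‖t • x - y‖ := rfl
    have ht0 : (t:ℝ) ≠ 0 := ne_of_gt ht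
    have ht3 : ((t:ℝ) ^ 3) ≠ 0 := by positivity
    rw [hVtx]
    calc (∫ y : R3, Q y ^ 2 / ‖t • x - y‖)
        = t ^ 3 * ((t ^ 3)⁻¹ * ∫ y : R3, Q y ^ 2 / ‖t • x - y‖) :=
          (mul_inv_cancel_left₀ ht3 _).symm
      _ = t ^ 3 * ((∫ z : R3, Q (t • z) ^ 2 / ‖x - z‖) / t) := by rw [← hcv]
      _ = t ^ 2 * ∫ z : R3, Q (t • z) ^ 2 / ‖x - z‖ := by
          field_simp
  have hVfun : V = fun y => (lam * Q y - 1 / (2 * m) * ∑ i, f₂ y (e i) (e i)) / Q y := by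
    funext y
    have h := heq y
    rw [hlapQpt y] at h
    rw [eq_div_iff (ne_of_gt (hpos y))]
    linarith
  have hdV : DifferentiableAt ℝ V x := by
    rw [hVfun]
    simp only [div_eq_mul_inv]
    exact (((hdQ x).const_mul lam).sub (hdSum.const_mul (1/(2*m)))).mul
      ((hdQ x).inv (hpos x).ne')
  have hVsm : HasDerivAt (fun t : ℝ => V (t • x)) (fderiv ℝ V x x) 1 := by
    have h1 : HasDerivAt (fun s : ℝ => s • x) x 1 := by
      simpa using (hasDerivAt_id (1:ℝ)).smul_const x
    have h2 : HasFDerivAt V (fderiv ℝ V x) ((1:ℝ) • x) := by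
      rw [one_smul]; exact hdV.hasFDerivAt
    exact h2.comp_hasDerivAt 1 h1
  have hkey : fderiv ℝ V x x = 2 * V x + J := by
    have hpow := (hasDerivAt_pow 2 (1:ℝ)).mul hG
    norm_num at hpow
    have hG1' : (∫ z : R3, Q z ^ 2 / ‖x - z‖) = V x := rfl
    rw [hG1'] at hpow
    have hev : (fun t : ℝ => V (t • x))
        =ᶠ[nhds (1:ℝ)] (fun t => t ^ 2 * ∫ z : R3, Q (t • z) ^ 2 / ‖x - z‖) := by
      filter_upwards [isOpen_Ioi.mem_nhds (show (1:ℝ) ∈ Ioi (0:ℝ) by norm_num)] with t ht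
      exact hdil t ht
    have h6 := hpow.congr_of_eventuallyEq hev
    exact (h6.unique hVsm).symm
  have hconvsplit : conv (fun y => Q y * (f₁ y y + 2 * Q y)) x = 1/2 * J + 2 * V x := by
    have hpt : ∀ y : R3, Q y * (f₁ y y + 2 * Q y) / ‖x - y‖
        = 1/2 * (2 * Q y * f₁ y y / ‖x - y‖) + 2 * (Q y ^ 2 / ‖x - y‖) := by
      intro y
      rw [← mul_div_assoc, ← mul_div_assoc, ← add_div]
      congr 1
      ring
    show (∫ y : R3, Q y * (f₁ y y + 2 * Q y) / ‖x - y‖) = 1/2 * J + 2 * V x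
    simp only [hpt]
    rw [integral_add (hintg.const_mul (1/2)) (hintQ2.const_mul 2),
      integral_const_mul, integral_const_mul]
    rfl
  have hprod : fderiv ℝ (fun y => V y * Q y) x x = V x * f₁ x x + Q x * fderiv ℝ V x x := by
    rw [fderiv_fun_mul hdV (hdQ x)]
    simp [smul_eq_mul, hf₁def]
  have hWfun : (fun y => V y * Q y)
      = (fun y => lam * Q y - 1 / (2 * m) * ∑ i, f₂ y (e i) (e i)) := by
    funext y
    have h := heq y
    rw [hlapQpt y] at h
    linarith
  have hWd : fderiv ℝ (fun y => lam * Q y - 1 / (2 * m) * ∑ i, f₂ y (e i) (e i)) x x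
      = lam * f₁ x x - 1 / (2 * m) * ∑ i, f₃ x x (e i) (e i) := by
    rw [fderiv_fun_sub ((hdQ x).const_mul lam) (hdSum.const_mul (1/(2*m))),
      ContinuousLinearMap.sub_apply, fderiv_const_mul (hdQ x) lam,
      fderiv_const_mul hdSum (1/(2*m)), ContinuousLinearMap.smul_apply,
      ContinuousLinearMap.smul_apply, hfderivS]
    simp [smul_eq_mul, hf₁def]
  have hcomb : lam * f₁ x x - 1 / (2 * m) * ∑ i, f₃ x x (e i) (e i)
      = V x * f₁ x x + Q x * fderiv ℝ V x x := by
    rw [← hWd, ← hWfun, hprod]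
  have hheq := heq x
  simp only [Lplus]
  rw [← hVdef, hlapxi, hconvsplit]
  linear_combination hcomb + 4 * hheq + Q x * hkey
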